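/- The function f(x) = x·log(a/x² + b) is monotonically increasing on (0,∞) provided a > 0 and b ≥ e/2. -/

import Mathlib

private lemma aux_hasDerivAt (a b x : ℝ) (ha : 0 < a) (hb0 : 0 < b) (hx : 0 < x) :
    HasDerivAt (fun x : ℝ => x * Real.log (a / x ^ 2 + b))
      (Real.log (a / x ^ 2 + b) - 2 * (a / x ^ 2) / (a / x ^ 2 + b)) x := by
  have hx2 : (x : ℝ) ^ 2 ≠ 0 := pow_ne_zero _ hx.ne'
  have ht : 0 < a / x ^ 2 + b := by positivity
  have h1 : HasDerivAt (fun x : ℝ => a / x ^ 2 + b) (-(2 * a / x ^ 3)) x := by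
    have := ((hasDerivAt_const x a).div (hasDerivAt_pow 2 x) hx2).add_const b
    refine this.congr_deriv ?_
    field_simp
    ring
  have hlog : HasDerivAt (fun x : ℝ => Real.log (a / x ^ 2 + b))
      (-(2 * a / x ^ 3) / (a / x ^ 2 + b)) x := h1.log ht.ne'
  have := (hasDerivAt_id x).mul hlog
  refine this.congr_deriv ?_
  have hx3 : (x : ℝ) ^ 3 ≠ 0 := pow_ne_zero _ hx.ne'
  simp only [id]
  field_simp
  ring

private lemma aux_pos (a b x : ℝ) (ha : 0 < a) (hb : Real.exp 1 / 2 ≤ b) (hx : 0 < x)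
    (hne : a / x ^ 2 + b ≠ Real.exp 1) :
    0 < Real.log (a / x ^ 2 + b) - 2 * (a / x ^ 2) / (a / x ^ 2 + b) := by
  have he : 0 < Real.exp 1 := Real.exp_pos 1
  have hb0 : 0 < b := lt_of_lt_of_le (by positivity) hb
  set u : ℝ := a / x ^ 2 with hu
  have hu0 : 0 < u := by positivity
  set t : ℝ := u + b with htdef
  have ht : 0 < t := by positivity
  -- log t > 2 - e/t
  have h1 : Real.log (Real.exp 1 / t) < Real.exp 1 / t - 1 :=
    Real.log_lt_sub_one_of_pos (by positivity)
      (by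
        intro h
        apply hne
        have : Real.exp 1 = t := by
          field_simp at h
          linarith
        simpa [htdef] using this.symm)
  rw [Real.log_div he.ne' ht.ne', Real.log_exp] at h1
  -- so 2 - e/t < log t, multiply through by t
  have h2 : 2 * t - Real.exp 1 < t * Real.log t := by
    have h3 : (2 : ℝ) - Real.exp 1 / t < Real.log t := by linarith
    have := (mul_lt_mul_iff_right₀ ht).2 h3
    calc 2 * t - Real.exp 1 = t * (2 - Real.exp 1 / t) := by field_simp
      _ < t * Real.log t := this
  have h4 : 2 * u < t * Real.log t := by
    have : 2 * u = 2 * t - 2 * b := by rw [htdef]; ring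
    nlinarith
  rw [sub_pos, div_lt_iff₀ ht]
  nlinarith

private lemma aux_glue {f : ℝ → ℝ} {c : ℝ} (hc : 0 < c)
    (h1 : StrictMonoOn f (Set.Ioc 0 c)) (h2 : StrictMonoOn f (Set.Ici c)) :
    StrictMonoOn f (Set.Ioi 0) := by
  intro x hx y hy hxy
  simp only [Set.mem_Ioi] at hx hy
  rcases le_or_gt y c with h | h
  · exact h1 ⟨hx, (hxy.le.trans h)⟩ ⟨hy, h⟩ hxy
  · rcases le_or_gt x c with h' | h'
    · have hxc : f x ≤ f c := by
        rcases h'.eq_or_lt with rfl | h''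
        · exact le_refl _
        · exact (h1 ⟨hx, h'⟩ ⟨hc, le_refl c⟩ h'').le
      exact lt_of_le_of_lt hxc (h2 (le_refl c) h.le h)
    · exact h2 h'.le h.le hxy

/-- The function `f(x) = x·log(a/x² + b)` is monotonically increasing on `(0,∞)`
provided `a > 0` and `b ≥ e/2`. -/
theorem strictMonoOn_mul_log_div_sq (a b : ℝ) (ha : 0 < a) (hb : Real.exp 1 / 2 ≤ b) :
    StrictMonoOn (fun x : ℝ => x * Real.log (a / x ^ 2 + b)) (Set.Ioi 0) := by
  have he : 0 < Real.exp 1 := Real.exp_pos 1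
  have hb0 : 0 < b := lt_of_lt_of_le (by positivity) hb
  set f : ℝ → ℝ := fun x : ℝ => x * Real.log (a / x ^ 2 + b) with hf
  have hcont : ∀ x : ℝ, 0 < x → ContinuousWithinAt f (Set.Ioi (0:ℝ)) x := fun x hx =>
    ((aux_hasDerivAt a b x ha hb0 hx).continuousAt).continuousWithinAt
  have hderiv : ∀ x : ℝ, 0 < x → a / x ^ 2 + b ≠ Real.exp 1 → 0 < deriv f x := by
    intro x hx hne
    rw [(aux_hasDerivAt a b x ha hb0 hx).deriv]
    exact aux_pos a b x ha hb hx hne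
  rcases le_or_gt (Real.exp 1) b with hbe | hbe
  · -- t = a/x² + b > e always
    apply strictMonoOn_of_deriv_pos (convex_Ioi 0)
    · exact fun x hx => hcont x hx
    · intro x hx
      rw [interior_Ioi] at hx
      have hx : (0:ℝ) < x := hx
      apply hderiv x hx
      have : 0 < a / x ^ 2 := by positivity
      intro h
      nlinarith
  · -- b < e; critical point x₀ = √(a/(e-b))
    set c : ℝ := Real.exp 1 - b with hcdef
    have hc : 0 < c := by linarith
    set x₀ : ℝ := Real.sqrt (a / c) with hx₀def
    have hac : 0 < a / c := by positivity
    have hx₀ : 0 < x₀ := Real.sqrt_pos.2 hac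
    have hx₀sq : x₀ ^ 2 = a / c := Real.sq_sqrt hac.le
    apply aux_glue hx₀
    · apply strictMonoOn_of_deriv_pos (convex_Ioc 0 x₀)
      · intro x hx
        exact (((aux_hasDerivAt a b x ha hb0 hx.1).continuousAt).continuousWithinAt)
      · intro x hx
        rw [interior_Ioc] at hx
        obtain ⟨hx1, hx2⟩ := hx
        apply hderiv x hx1
        -- x < x₀ ⟹ a/x² > c ⟹ t > e
        have hxx : x ^ 2 < x₀ ^ 2 := by nlinarith
        have : c < a / x ^ 2 := by
          rw [hx₀sq] at hxx
          rw [lt_div_iff₀ (by positivity)]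
          rw [lt_div_iff₀ hc] at hxx
          linarith
        intro h
        rw [hcdef] at this
        linarith
    · apply strictMonoOn_of_deriv_pos (convex_Ici x₀)
      · intro x hx
        exact (((aux_hasDerivAt a b x ha hb0 (lt_of_lt_of_le hx₀ hx)).continuousAt).continuousWithinAt)
      · intro x hx
        rw [interior_Ici] at hx
        have hxlt : x₀ < x := hx
        have hx1 : (0:ℝ) < x := hx₀.trans hxlt
        apply hderiv x hx1
        have hxx : x₀ ^ 2 < x ^ 2 := by nlinarith
        have : a / x ^ 2 < c := by
          rw [hx₀sq] at hxx
          rw [div_lt_iff₀ (by positivity)]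
          rw [div_lt_iff₀ hc] at hxx
          nlinarith
        intro h
        rw [hcdef] at this
        linarith
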